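/- Under the assumption M^{1−1/k} ≤ H, one has Φ(0) = Σ_{M < m1^k, m2^k ≤ M'} max(1 − |m1^k − m2^k|/(2H), 0) ≪ H · M^{2/k − 1}, where the implied constant depends only on k. -/
import Mathlib


open Finset

noncomputable def ww (H : ℝ) (h : ℤ) : ℝ := max (1 - |(h : ℝ)| / (2 * H)) 0

noncomputable def mRange (k : ℕ) (M M' : ℝ) : Finset ℕ :=
  (Finset.Icc 1 ⌈M'⌉₊).filter (fun m => M < (m : ℝ) ^ k ∧ (m : ℝ) ^ k ≤ M')

/-- `Φ(0) = Σ_{M < m1^k, m2^k ≤ M'} w(m1^k - m2^k)` -/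
noncomputable def PhiZero (k : ℕ) (H M M' : ℝ) : ℝ :=
  ∑ m1 ∈ mRange k M M', ∑ m2 ∈ mRange k M M',
    ww H ((m1 : ℤ) ^ k - (m2 : ℤ) ^ k)

lemma ww_le_one (H : ℝ) (hH : 0 < H) (h : ℤ) : ww H h ≤ 1 := by
  unfold ww
  have h0 : (0:ℝ) ≤ |(h:ℝ)| / (2 * H) := by positivity
  exact max_le (by linarith) (by norm_num)

lemma ww_eq_zero (H : ℝ) (hH : 0 < H) (h : ℤ) (hh : 2 * H ≤ |(h:ℝ)|) : ww H h = 0 := by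
  unfold ww
  have h2 : (1:ℝ) ≤ |(h:ℝ)| / (2 * H) := (one_le_div (by positivity)).2 hh
  exact max_eq_right (by linarith)

lemma rpow_root_le (k : ℕ) (hk0 : k ≠ 0) (M : ℝ) (hM : 0 ≤ M) (b : ℕ)
    (hb : M ≤ (b:ℝ) ^ k) : M ^ ((1:ℝ)/k) ≤ (b:ℝ) := by
  have h := Real.rpow_le_rpow hM hb (by positivity : (0:ℝ) ≤ (1:ℝ)/k)
  rwa [← Real.rpow_natCast (b:ℝ) k, ← Real.rpow_mul (by positivity),
    mul_one_div, div_self (by exact_mod_cast hk0), Real.rpow_one] at h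

lemma key_gap (k : ℕ) (hk : 2 ≤ k) (M : ℝ) (hM : 1 ≤ M)
    (a b : ℕ) (ha : M < (a:ℝ) ^ k) (hb : M < (b:ℝ) ^ k) :
    |(a:ℝ) - b| * M ^ ((1:ℝ) - 1/k) ≤ |(a:ℝ) ^ k - (b:ℝ) ^ k| := by
  have hM0 : (0:ℝ) < M := lt_of_lt_of_le one_pos hM
  wlog hab : b ≤ a generalizing a b
  · rw [abs_sub_comm, abs_sub_comm ((a:ℝ)^k)]
    exact this b a hb ha (le_of_not_ge hab)
  have hk0 : k ≠ 0 := by omega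
  have hbk : M ^ ((1:ℝ)/k) ≤ (b:ℝ) := rpow_root_le k hk0 M hM0.le b hb.le
  have hbR : ((b:ℝ)) ≤ (a:ℝ) := by exact_mod_cast hab
  have hpow : (a:ℝ) ^ k - (b:ℝ) ^ k = ((a:ℝ)^k - (b:ℝ)^k) := rfl
  -- b^{k-1} ≥ M^{1-1/k}
  have h1 : M ^ ((1:ℝ) - 1/k) ≤ (b:ℝ) ^ (k-1) := by
    have h2 : (M ^ ((1:ℝ)/k)) ^ (k-1) ≤ (b:ℝ) ^ (k-1) :=
      pow_le_pow_left₀ (Real.rpow_nonneg hM0.le _) hbk _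
    calc M ^ ((1:ℝ) - 1/k) = (M ^ ((1:ℝ)/k)) ^ (k-1) := by
          rw [← Real.rpow_natCast (M ^ ((1:ℝ)/k)) (k-1), ← Real.rpow_mul hM0.le]
          congr 1
          have : ((k - 1 : ℕ) : ℝ) = (k:ℝ) - 1 := by
            rw [Nat.cast_sub (by omega)]; norm_num
          rw [this]
          field_simp
      _ ≤ (b:ℝ) ^ (k-1) := h2
  -- a^k - b^k ≥ b^{k-1} (a - b)
  have hak : (b:ℝ) ^ (k-1) * a ≤ (a:ℝ) ^ k := by
    calc (b:ℝ) ^ (k-1) * a ≤ (a:ℝ) ^ (k-1) * a :=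
          mul_le_mul_of_nonneg_right (pow_le_pow_left₀ b.cast_nonneg hbR _) a.cast_nonneg
      _ = (a:ℝ) ^ k := by rw [← pow_succ]; congr 1; omega
  have hbkk : (b:ℝ) ^ k = (b:ℝ) ^ (k-1) * b := by rw [← pow_succ]; congr 1; omega
  have habs1 : |(a:ℝ) - b| = (a:ℝ) - b := abs_of_nonneg (by linarith)
  have habs2 : |(a:ℝ) ^ k - (b:ℝ) ^ k| = (a:ℝ)^k - (b:ℝ)^k :=
    abs_of_nonneg (by nlinarith [pow_le_pow_left₀ b.cast_nonneg hbR k])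
  rw [habs1, habs2]
  have h3 : ((a:ℝ) - b) * M ^ ((1:ℝ) - 1/k) ≤ ((a:ℝ) - b) * (b:ℝ)^(k-1) :=
    mul_le_mul_of_nonneg_left h1 (by linarith)
  nlinarith [h3, hak, hbkk]

theorem PhiZero_bound (k : ℕ) (hk : 2 ≤ k) :
    ∃ C : ℝ, 0 < C ∧ ∀ H M M' : ℝ, 1 ≤ H → 1 ≤ M → M < M' → M' ≤ 2 * M →
      M ^ ((1 : ℝ) - 1 / k) ≤ H →
      PhiZero k H M M' ≤ C * H * M ^ ((2 : ℝ) / k - 1) := by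
  refine ⟨12, by norm_num, ?_⟩
  intro H M M' hH hM hMM' hM'2 hHM
  have hk0 : k ≠ 0 := by omega
  have hM0 : (0:ℝ) < M := lt_of_lt_of_le one_pos hM
  have hH0 : (0:ℝ) < H := lt_of_lt_of_le one_pos hH
  set S := mRange k M M' with hS
  have hmemS : ∀ m ∈ S, M < (m:ℝ)^k ∧ (m:ℝ)^k ≤ M' := by
    intro m hm
    exact (Finset.mem_filter.1 hm).2
  -- key quantity R = 2 H M^{1/k-1} ≥ 2, since H M^{1/k-1} ≥ 1
  have hMexp : M ^ ((1:ℝ)/k - 1) = (M ^ ((1:ℝ) - 1/k))⁻¹ := by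
    rw [← Real.rpow_neg hM0.le]; ring_nf
  have hHM1 : (1:ℝ) ≤ H * M ^ ((1:ℝ)/k - 1) := by
    rw [hMexp, ← div_eq_mul_inv, le_div_iff₀ (Real.rpow_pos_of_pos hM0 _), one_mul]
    exact hHM
  set R : ℝ := 2 * (H * M ^ ((1:ℝ)/k - 1)) with hRdef
  have hR2 : (2:ℝ) ≤ R := by simp only [hRdef]; linarith
  have hR0 : (0:ℝ) ≤ R := by linarith
  set D : ℕ := ⌊R⌋₊ with hD
  -- inner sum bound
  have inner : ∀ m1 ∈ S, (∑ m2 ∈ S, ww H ((m1:ℤ)^k - (m2:ℤ)^k)) ≤ 3 * R := by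
    intro m1 hm1
    have step1 : (∑ m2 ∈ S, ww H ((m1:ℤ)^k - (m2:ℤ)^k)) ≤
        ((S.filter (fun m2 : ℕ => |((m1:ℝ)^k - (m2:ℝ)^k)| < 2*H)).card : ℝ) := by
      rw [← Finset.sum_boole]
      apply Finset.sum_le_sum
      intro m2 _
      by_cases h : |((m1:ℝ)^k - (m2:ℝ)^k)| < 2*H
      · simp only [h, if_true]
        exact ww_le_one H hH0 _
      · simp only [h, if_false]
        have := ww_eq_zero H hH0 ((m1:ℤ)^k - (m2:ℤ)^k) (by push_cast; linarith [le_of_not_gt h])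
        rw [this]
    have step2 : (S.filter (fun m2 : ℕ => |((m1:ℝ)^k - (m2:ℝ)^k)| < 2*H)) ⊆
        Finset.Icc (m1 - D) (m1 + D) := by
      intro m2 hm2
      obtain ⟨hm2S, hlt⟩ := Finset.mem_filter.1 hm2
      have hgap := key_gap k hk M hM m1 m2 (hmemS m1 hm1).1 (hmemS m2 hm2S).1
      have hdist : |(m1:ℝ) - m2| ≤ R := by
        have hp : (0:ℝ) < M ^ ((1:ℝ) - 1/k) := Real.rpow_pos_of_pos hM0 _
        have h5 : |(m1:ℝ) - m2| * M ^ ((1:ℝ) - 1/k) ≤ 2 * H :=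
          le_of_lt (lt_of_le_of_lt hgap hlt)
        calc |(m1:ℝ) - m2| ≤ 2 * H / M ^ ((1:ℝ) - 1/k) := (le_div_iff₀ hp).2 h5
          _ = R := by rw [hRdef, hMexp]; ring
      rw [Finset.mem_Icc]
      have h1 : (m2:ℝ) ≤ m1 + R := by
        have := abs_le.1 hdist
        linarith [this.1]
      have h2 : (m1:ℝ) ≤ m2 + R := by
        have := abs_le.1 hdist
        linarith [this.2]
      constructor
      · have : m1 ≤ m2 + D := by
          have : (m1:ℝ) ≤ ((m2 + D : ℕ) : ℝ) + (R - D) := by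
            push_cast
            linarith
          have hRD : R - D < 1 := by
            have := Nat.lt_floor_add_one R
            push_cast
            linarith [Nat.lt_floor_add_one R]
          have : (m1:ℝ) < ((m2 + D : ℕ) : ℝ) + 1 := by linarith
          exact_mod_cast Nat.lt_succ_iff.1 (by exact_mod_cast this)
        omega
      · have : m2 ≤ m1 + D := by
          have h3 : (m2:ℝ) ≤ ((m1 + D : ℕ) : ℝ) + (R - D) := by push_cast; linarith
          have hRD : R - D < 1 := by linarith [Nat.lt_floor_add_one R]
          have h4 : (m2:ℝ) < ((m1 + D : ℕ) : ℝ) + 1 := by linarith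
          exact_mod_cast Nat.lt_succ_iff.1 (by exact_mod_cast h4)
        exact this
    have step3 : ((Finset.Icc (m1 - D) (m1 + D)).card : ℝ) ≤ 2 * D + 1 := by
      rw [Nat.card_Icc]
      push_cast
      have : (m1 + D + 1 - (m1 - D) : ℕ) ≤ 2 * D + 1 := by omega
      exact_mod_cast Nat.cast_le.2 this
    have hDR : (D:ℝ) ≤ R := Nat.floor_le hR0
    calc (∑ m2 ∈ S, ww H ((m1:ℤ)^k - (m2:ℤ)^k))
        ≤ ((S.filter (fun m2 : ℕ => |((m1:ℝ)^k - (m2:ℝ)^k)| < 2*H)).card : ℝ) := step1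
      _ ≤ ((Finset.Icc (m1 - D) (m1 + D)).card : ℝ) := by
          exact_mod_cast Nat.cast_le.2 (Finset.card_le_card step2)
      _ ≤ 2 * D + 1 := step3
      _ ≤ 2 * R + 1 := by linarith
      _ ≤ 3 * R := by linarith
  -- card S bound
  have hcardS : (S.card : ℝ) ≤ 2 * M ^ ((1:ℝ)/k) := by
    set N : ℕ := ⌊2 * M ^ ((1:ℝ)/k)⌋₊ with hN
    have hsub : S ⊆ Finset.Icc 1 N := by
      intro m hm
      obtain ⟨hmI, hm1, hm2⟩ := Finset.mem_filter.1 hm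
      rw [Finset.mem_Icc]
      refine ⟨(Finset.mem_Icc.1 hmI).1, Nat.le_floor ?_⟩
      have hb : ((m:ℝ))^k ≤ (2 * M ^ ((1:ℝ)/k))^k := by
        have hM1k : (M ^ ((1:ℝ)/k))^k = M := by
          rw [← Real.rpow_natCast (M ^ ((1:ℝ)/k)) k, ← Real.rpow_mul hM0.le,
            one_div, inv_mul_cancel₀ (by exact_mod_cast hk0 : (k:ℝ) ≠ 0), Real.rpow_one]
        rw [mul_pow, hM1k]
        have h2k : (2:ℝ) ≤ 2^k := by
          calc (2:ℝ) = 2^1 := by norm_num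
            _ ≤ 2^k := pow_le_pow_right₀ one_le_two (by omega)
        nlinarith
      exact le_of_pow_le_pow_left₀ hk0 (by positivity) hb
    calc (S.card : ℝ) ≤ ((Finset.Icc 1 N).card : ℝ) := by
          exact_mod_cast Nat.cast_le.2 (Finset.card_le_card hsub)
      _ = N := by
          have hN1 : N + 1 - 1 = N := by omega
          rw [Nat.card_Icc, hN1]
      _ ≤ 2 * M ^ ((1:ℝ)/k) := Nat.floor_le (by positivity)
  -- combine
  have hfinal : PhiZero k H M M' ≤ (S.card : ℝ) * (3 * R) := by
    unfold PhiZero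
    rw [← hS]
    calc (∑ m1 ∈ S, ∑ m2 ∈ S, ww H ((m1:ℤ)^k - (m2:ℤ)^k))
        ≤ ∑ m1 ∈ S, 3 * R := Finset.sum_le_sum inner
      _ = (S.card : ℝ) * (3 * R) := by rw [Finset.sum_const, nsmul_eq_mul]
  have hR3 : (0:ℝ) ≤ 3 * R := by linarith
  calc PhiZero k H M M' ≤ (S.card : ℝ) * (3 * R) := hfinal
    _ ≤ (2 * M ^ ((1:ℝ)/k)) * (3 * R) := mul_le_mul_of_nonneg_right hcardS hR3
    _ = 12 * H * (M ^ ((1:ℝ)/k) * M ^ ((1:ℝ)/k - 1)) := by rw [hRdef]; ring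
    _ = 12 * H * M ^ ((2:ℝ)/k - 1) := by
        rw [← Real.rpow_add hM0]
        congr 2
        ring
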